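/- Define q(x) = erf(x/2)/x - e^{-x²/4}/√π for x > 0. Then q extends to an even analytic function on ℝ with q(0) = 0, q(x) → 0 as x → ∞, q(x) > 0 for x > 0, and q is bounded; hence q attains a positive maximum q_max on (0,∞). Consequently, with A(r) = 1 - 2GMμ·q(μr), if M < 1/(2Gμ·q_max) then A(r) > 0 for all r > 0. -/

import Mathlib

/-- The error function `erf(x) = (2/√π)∫₀^x e^{-t²} dt`. -/
noncomputable def erf (x : ℝ) : ℝ :=
  2 / Real.sqrt Real.pi * ∫ t in (0:ℝ)..x, Real.exp (-(t ^ 2))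

open MeasureTheory Filter intervalIntegral Topology FormalMultilinearSeries

noncomputable def erfFF (x : ℝ) : ℝ := ∫ t in (0:ℝ)..x, Real.exp (-(t ^ 2))

lemma contExp2 : Continuous fun t : ℝ => Real.exp (-(t ^ 2)) := by
  exact (Real.continuous_exp.comp (continuous_pow 2).neg)

lemma erfFF_neg (x : ℝ) : erfFF (-x) = - erfFF x := by
  have h := intervalIntegral.integral_comp_neg (a := (0:ℝ)) (b := x)
    (fun t => Real.exp (-(t ^ 2)))
  have h2 : (∫ t in (0:ℝ)..x, Real.exp (-((-t) ^ 2))) = erfFF x := by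
    unfold erfFF; congr 1; ext t; congr 2; ring
  rw [neg_zero] at h
  rw [h2] at h
  rw [intervalIntegral.integral_symm] at h
  unfold erfFF at h ⊢
  linarith [h]

lemma erfFF_hasDerivAt (b : ℝ) : HasDerivAt erfFF (Real.exp (-(b ^ 2))) b :=
  intervalIntegral.integral_hasDerivAt_right (contExp2.intervalIntegrable 0 b)
    (contExp2.stronglyMeasurableAtFilter _ _) contExp2.continuousAt

/-- coefficients of the power series of `erfFF` -/
noncomputable def qcoef (n : ℕ) : ℝ :=
  if n % 2 = 1 then (-1) ^ (n / 2) / ((n / 2).factorial * n) else 0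

lemma qcoef_odd (k : ℕ) : qcoef (2 * k + 1) = (-1) ^ k / (k.factorial * (2 * k + 1)) := by
  have h1 : (2 * k + 1) % 2 = 1 := by omega
  have h2 : (2 * k + 1) / 2 = k := by omega
  simp only [qcoef, h1, if_true, h2]
  push_cast
  ring

lemma qcoef_even {n : ℕ} (h : n % 2 = 0) : qcoef n = 0 := by
  simp [qcoef, h]

lemma summable_bound (r : ℝ) (hr : 0 ≤ r) :
    Summable (fun k : ℕ => r ^ (2 * k + 1) / (k.factorial * (2 * k + 1))) := by
  have hs : Summable (fun k : ℕ => r * ((r ^ 2) ^ k / k.factorial)) :=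
    (Real.summable_pow_div_factorial (r ^ 2)).mul_left r
  apply hs.of_nonneg_of_le (fun k => by positivity)
  intro k
  · 
    have h1 : r ^ (2 * k + 1) = r * (r ^ 2) ^ k := by
      rw [← pow_mul]; ring
    rw [h1]
    rw [mul_div_assoc]
    apply mul_le_mul_of_nonneg_left _ hr
    apply div_le_div_of_nonneg_left (by positivity) (by positivity)
    have h0 : (0:ℝ) ≤ 2 * (k:ℝ) := by positivity
    nlinarith [(Nat.cast_pos (α := ℝ)).mpr (Nat.factorial_pos k)]

lemma exp_tsum (z : ℝ) : Real.exp z = ∑' n : ℕ, z ^ n / n.factorial := by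
  rw [Real.exp_eq_exp_ℝ, NormedSpace.exp_eq_tsum_div]

lemma hasSum_erfFF_nonneg {y : ℝ} (hy : 0 ≤ y) :
    HasSum (fun k : ℕ => (-1 : ℝ) ^ k * y ^ (2 * k + 1) / (k.factorial * (2 * k + 1)))
      (erfFF y) := by
  have hcont : ∀ k : ℕ, Continuous (fun t : ℝ => (-1 : ℝ) ^ k * t ^ (2 * k) / k.factorial) := by
    intro k
    exact ((continuous_const.mul (continuous_pow (2 * k))).div_const _)
  have hint : ∀ k : ℕ, IntegrableOn
      (fun t : ℝ => (-1 : ℝ) ^ k * t ^ (2 * k) / k.factorial) (Set.Ioc 0 y) volume :=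
    fun k => (hcont k).integrableOn_Ioc
  -- the norm integrals
  have hnormval : ∀ k : ℕ, (∫ t in Set.Ioc (0:ℝ) y,
      ‖(-1 : ℝ) ^ k * t ^ (2 * k) / k.factorial‖) = y ^ (2 * k + 1) / (k.factorial * (2 * k + 1)) := by
    intro k
    have heq : Set.EqOn (fun t : ℝ => ‖(-1 : ℝ) ^ k * t ^ (2 * k) / k.factorial‖)
        (fun t : ℝ => (1 / k.factorial : ℝ) * t ^ (2 * k)) (Set.Ioc 0 y) := by
      intro t ht
      have ht0 : 0 ≤ t := le_of_lt ht.1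
      simp only [norm_mul, norm_div, norm_pow, norm_neg, norm_one, Real.norm_eq_abs,
        abs_of_nonneg ht0]
      rw [abs_of_nonneg (by positivity : (0:ℝ) ≤ (k.factorial : ℝ))]
      simp [one_pow]
      ring
    rw [setIntegral_congr_fun measurableSet_Ioc heq]
    rw [MeasureTheory.integral_const_mul]
    rw [← intervalIntegral.integral_of_le hy, integral_pow]
    push_cast
    field_simp
    simp
  have hsumnorm : Summable (fun k : ℕ => ∫ t in Set.Ioc (0:ℝ) y,
      ‖(-1 : ℝ) ^ k * t ^ (2 * k) / k.factorial‖) := by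
    rw [show (fun k : ℕ => ∫ t in Set.Ioc (0:ℝ) y, ‖(-1 : ℝ) ^ k * t ^ (2 * k) / k.factorial‖)
      = fun k : ℕ => y ^ (2 * k + 1) / (k.factorial * (2 * k + 1)) from funext hnormval]
    exact summable_bound y hy
  have KEY := MeasureTheory.hasSum_integral_of_summable_integral_norm
    (μ := volume.restrict (Set.Ioc (0:ℝ) y)) hint hsumnorm
  -- identify the total integral
  have htsum : ∀ t : ℝ, (∑' k : ℕ, (-1 : ℝ) ^ k * t ^ (2 * k) / k.factorial)
      = Real.exp (-(t ^ 2)) := by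
    intro t
    rw [exp_tsum (-(t ^ 2))]
    apply tsum_congr
    intro k
    rw [neg_pow (t ^ 2) k, ← pow_mul]
  have hI : (∫ t in Set.Ioc (0:ℝ) y, (∑' k : ℕ, (-1 : ℝ) ^ k * t ^ (2 * k) / k.factorial))
      = erfFF y := by
    rw [setIntegral_congr_fun measurableSet_Ioc (fun t _ => htsum t)]
    rw [← intervalIntegral.integral_of_le hy]
    rfl
  rw [hI] at KEY
  -- identify the term integrals
  have hterm : ∀ k : ℕ, (∫ t in Set.Ioc (0:ℝ) y, (-1 : ℝ) ^ k * t ^ (2 * k) / k.factorial)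
      = (-1 : ℝ) ^ k * y ^ (2 * k + 1) / (k.factorial * (2 * k + 1)) := by
    intro k
    have : (fun t : ℝ => (-1 : ℝ) ^ k * t ^ (2 * k) / k.factorial)
        = fun t : ℝ => ((-1 : ℝ) ^ k / k.factorial) * t ^ (2 * k) := by
      funext t; ring
    rw [this, MeasureTheory.integral_const_mul, ← intervalIntegral.integral_of_le hy,
      integral_pow]
    push_cast
    field_simp
    simp
  rw [show (fun k : ℕ => ∫ t in Set.Ioc (0:ℝ) y, (-1 : ℝ) ^ k * t ^ (2 * k) / k.factorial)
    = fun k : ℕ => (-1 : ℝ) ^ k * y ^ (2 * k + 1) / (k.factorial * (2 * k + 1)) from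
    funext hterm] at KEY
  exact KEY

lemma hasSum_erfFF (y : ℝ) :
    HasSum (fun k : ℕ => (-1 : ℝ) ^ k * y ^ (2 * k + 1) / (k.factorial * (2 * k + 1)))
      (erfFF y) := by
  rcases le_or_gt 0 y with hy | hy
  · exact hasSum_erfFF_nonneg hy
  · have h := (hasSum_erfFF_nonneg (neg_nonneg.mpr hy.le)).neg
    rw [← erfFF_neg, neg_neg] at h
    have e : (fun k : ℕ => (-1 : ℝ) ^ k * y ^ (2 * k + 1) / (k.factorial * (2 * k + 1)))
        = fun k : ℕ => -((-1 : ℝ) ^ k * (-y) ^ (2 * k + 1) / (k.factorial * (2 * k + 1))) := by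
      funext k
      have hodd : Odd (2 * k + 1) := ⟨k, by ring⟩
      rw [hodd.neg_pow]
      ring
    rw [e]
    exact h

lemma oddinj : Function.Injective (fun k : ℕ => 2 * k + 1) := fun a b h => by
  simp only at h; omega

lemma oddrange {n : ℕ} (hn : n ∉ Set.range (fun k : ℕ => 2 * k + 1)) : n % 2 = 0 := by
  by_contra h
  exact hn ⟨n / 2, show 2 * (n / 2) + 1 = n by omega⟩

lemma hasFPS : HasFPowerSeriesOnBall erfFF (ofScalars ℝ qcoef) 0 ⊤ := by
  have hsummable : ∀ r : NNReal, Summable fun n : ℕ => ‖ofScalars ℝ qcoef n‖ * (r:ℝ) ^ n := by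
    intro r
    have hvanish : ∀ n ∉ Set.range (fun k : ℕ => 2 * k + 1),
        ‖ofScalars ℝ qcoef n‖ * (r:ℝ) ^ n = 0 := by
      intro n hn
      rw [ofScalars_norm, qcoef_even (oddrange hn)]
      simp
    rw [← Function.Injective.summable_iff oddinj hvanish]
    have : ((fun n : ℕ => ‖ofScalars ℝ qcoef n‖ * (r:ℝ) ^ n) ∘ fun k : ℕ => 2 * k + 1)
        = fun k : ℕ => (r:ℝ) ^ (2 * k + 1) / (k.factorial * (2 * k + 1)) := by
      funext k
      simp only [Function.comp_apply, ofScalars_norm, qcoef_odd]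
      rw [Real.norm_eq_abs, abs_div, abs_pow, abs_neg, abs_one, one_pow]
      rw [abs_of_nonneg (by positivity : (0:ℝ) ≤ (k.factorial : ℝ) * (2 * (k:ℝ) + 1))]
      ring
    rw [this]
    exact summable_bound r r.2
  constructor
  · rw [FormalMultilinearSeries.radius_eq_top_of_summable_norm _ hsummable]
  · exact ENNReal.zero_lt_top
  · intro y _
    simp only [zero_add]
    have hvanish : ∀ n ∉ Set.range (fun k : ℕ => 2 * k + 1),
        (ofScalars ℝ qcoef n fun _ => y) = 0 := by
      intro n hn
      rw [ofScalars_apply_eq, qcoef_even (oddrange hn)]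
      simp
    rw [← Function.Injective.hasSum_iff oddinj hvanish]
    have : ((fun n : ℕ => ofScalars ℝ qcoef n fun _ => y) ∘ fun k : ℕ => 2 * k + 1)
        = fun k : ℕ => (-1 : ℝ) ^ k * y ^ (2 * k + 1) / (k.factorial * (2 * k + 1)) := by
      funext k
      simp only [Function.comp_apply, ofScalars_apply_eq, qcoef_odd, smul_eq_mul]
      ring
    rw [this]
    exact hasSum_erfFF y

lemma erfFF_analytic (x : ℝ) : AnalyticAt ℝ erfFF x :=
  hasFPS.analyticAt_of_mem (by simp [EMetric.mem_ball, edist_lt_top])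

lemma erfFF_zero : erfFF 0 = 0 := intervalIntegral.integral_same

lemma erfFF_nonneg {y : ℝ} (hy : 0 ≤ y) : 0 ≤ erfFF y :=
  intervalIntegral.integral_nonneg hy (fun t _ => (Real.exp_pos _).le)

lemma erfFF_le {y : ℝ} (hy : 0 ≤ y) : erfFF y ≤ Real.exp (1/4) := by
  have h1 : erfFF y ≤ ∫ t in (0:ℝ)..y, Real.exp (1/4 - t) := by
    apply intervalIntegral.integral_mono_on hy (contExp2.intervalIntegrable 0 y)
      ((by continuity : Continuous fun t : ℝ => Real.exp (1/4 - t)).intervalIntegrable 0 y)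
    intro t _
    apply Real.exp_le_exp.mpr
    nlinarith [sq_nonneg (t - 1/2)]
  have h2 : (∫ t in (0:ℝ)..y, Real.exp (1/4 - t)) = Real.exp (1/4) - Real.exp (1/4 - y) := by
    rw [intervalIntegral.integral_comp_sub_left (fun t => Real.exp t) (1/4)]
    rw [integral_exp]
    norm_num
  rw [h2] at h1
  have := Real.exp_pos (1/4 - y)
  linarith

lemma erfFF_lower {x : ℝ} (hx : 0 < x) :
    x / 2 * Real.exp (-(x ^ 2 / 4)) < erfFF (x / 2) := by
  have h := intervalIntegral.integral_lt_integral_of_continuousOn_of_le_of_exists_lt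
    (f := fun _ : ℝ => Real.exp (-(x ^ 2 / 4))) (g := fun t : ℝ => Real.exp (-(t ^ 2)))
    (a := 0) (b := x / 2) (by linarith) continuousOn_const contExp2.continuousOn
    (fun t ht => Real.exp_le_exp.mpr (by nlinarith [ht.1, ht.2]))
    ⟨0, ⟨le_refl 0, by linarith⟩, by
      apply Real.exp_lt_exp.mpr
      nlinarith⟩
  rw [intervalIntegral.integral_const] at h
  simpa [smul_eq_mul, erfFF] using h

noncomputable def GG (x : ℝ) : ℝ := erfFF (x / 2)

lemma GG_zero : GG 0 = 0 := by
  unfold GG; rw [show (0:ℝ)/2 = 0 by norm_num, erfFF_zero]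

lemma GG_neg (x : ℝ) : GG (-x) = - GG x := by
  unfold GG; rw [show (-x)/2 = -(x/2) by ring, erfFF_neg]

lemma GG_analytic (x : ℝ) : AnalyticAt ℝ GG x := by
  have h1 : AnalyticAt ℝ (fun y : ℝ => y / 2) x :=
    analyticAt_id.div analyticAt_const two_ne_zero
  have h2 : AnalyticAt ℝ (erfFF ∘ fun y : ℝ => y / 2) x :=
    AnalyticAt.comp (f := fun y : ℝ => y / 2) (erfFF_analytic (x / 2)) h1
  exact h2

lemma deriv_GG_zero : deriv GG 0 = 1 / 2 := by
  have h1 : HasDerivAt erfFF 1 ((0:ℝ) / 2) := by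
    have := erfFF_hasDerivAt 0
    norm_num at this ⊢
    exact this
  have h2 : HasDerivAt (fun y : ℝ => y / 2) (1 / 2) 0 := by
    simpa using (hasDerivAt_id (0:ℝ)).div_const 2
  have h3 := h1.comp 0 h2
  have : deriv (erfFF ∘ fun y : ℝ => y / 2) 0 = 1 * (1 / 2) := h3.deriv
  rw [show GG = erfFF ∘ fun y : ℝ => y / 2 from rfl]
  simpa using this

lemma dslope_GG_analytic (x : ℝ) : AnalyticAt ℝ (dslope GG 0) x := by
  rcases eq_or_ne x 0 with rfl | hx
  · obtain ⟨p, hp⟩ := GG_analytic 0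
    exact hp.has_fpower_series_dslope_fslope.analyticAt
  · have h1 : AnalyticAt ℝ (fun y : ℝ => GG y / y) x :=
      (GG_analytic x).div analyticAt_id hx
    apply h1.congr
    filter_upwards [eventually_ne_nhds hx] with y hy
    rw [dslope_of_ne _ hy, slope_def_field, GG_zero]
    simp

lemma dslope_GG_even (x : ℝ) : dslope GG 0 (-x) = dslope GG 0 x := by
  rcases eq_or_ne x 0 with rfl | hx
  · norm_num
  · rw [dslope_of_ne _ (neg_ne_zero.mpr hx), dslope_of_ne _ hx,
      slope_def_field, slope_def_field, GG_zero, GG_neg]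
    simp only [sub_zero, neg_div_neg_eq]

lemma dslope_GG_pos_eq {x : ℝ} (hx : x ≠ 0) : dslope GG 0 x = GG x / x := by
  rw [dslope_of_ne _ hx, slope_def_field, GG_zero]
  simp

noncomputable def gfun (x : ℝ) : ℝ :=
  2 / Real.sqrt Real.pi * dslope GG 0 x - Real.exp (-(x ^ 2 / 4)) / Real.sqrt Real.pi

lemma gfun_analytic (x : ℝ) : AnalyticAt ℝ gfun x := by
  have hπ : 0 < Real.sqrt Real.pi := Real.sqrt_pos.mpr Real.pi_pos
  have hinner : AnalyticAt ℝ (fun y : ℝ => -(y ^ 2 / 4)) x :=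
    ((analyticAt_id.pow 2).div analyticAt_const (by norm_num : (4:ℝ) ≠ 0)).neg
  have hexp : AnalyticAt ℝ (Real.exp ∘ fun y : ℝ => -(y ^ 2 / 4)) x :=
    AnalyticAt.comp (f := fun y : ℝ => -(y ^ 2 / 4)) analyticAt_rexp hinner
  exact (analyticAt_const.mul (dslope_GG_analytic x)).sub (hexp.div analyticAt_const hπ.ne')

lemma gfun_even (x : ℝ) : gfun (-x) = gfun x := by
  unfold gfun
  rw [dslope_GG_even, neg_pow]
  norm_num

lemma gfun_zero : gfun 0 = 0 := by
  have hπ : 0 < Real.sqrt Real.pi := Real.sqrt_pos.mpr Real.pi_pos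
  unfold gfun
  rw [dslope_same, deriv_GG_zero]
  norm_num

/-- The function `q(x) = erf(x/2)/x - e^{-x²/4}/√π` extends to an even analytic function
vanishing at `0` and at infinity, is positive for `x > 0`, and attains a positive
maximum `q_max` on `(0,∞)`. Consequently, for `A(r) = 1 - 2GMμ·q(μr)`, if
`M < 1/(2Gμ·q_max)` then `A(r) > 0` for all `r > 0` (mass gap for horizon formation). -/
theorem stmt16 (G μ : ℝ) (hG : 0 < G) (hμ : 0 < μ)
    (q : ℝ → ℝ)
    (hq : ∀ x, 0 < x → q x = erf (x / 2) / x - Real.exp (-(x ^ 2 / 4)) / Real.sqrt Real.pi) :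
    (∃ g : ℝ → ℝ, (∀ x, AnalyticAt ℝ g x) ∧ (∀ x, g (-x) = g x) ∧
      (∀ x, 0 < x → g x = q x) ∧ g 0 = 0) ∧
    Filter.Tendsto q Filter.atTop (nhds 0) ∧
    (∀ x, 0 < x → 0 < q x) ∧
    ∃ qmax > (0:ℝ), (∀ x > (0:ℝ), q x ≤ qmax) ∧ (∃ x > (0:ℝ), q x = qmax) ∧
      ∀ M > (0:ℝ), M < 1 / (2 * G * μ * qmax) →
        ∀ r > (0:ℝ), 0 < 1 - 2 * G * M * μ * q (μ * r) := by
  have hπ : 0 < Real.sqrt Real.pi := Real.sqrt_pos.mpr Real.pi_pos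
  have herf : ∀ x : ℝ, erf (x / 2) = 2 / Real.sqrt Real.pi * erfFF (x / 2) := fun x => rfl
  have hgq : ∀ x, 0 < x → gfun x = q x := by
    intro x hx
    rw [hq x hx, herf x]
    unfold gfun
    rw [dslope_GG_pos_eq hx.ne']
    unfold GG
    ring
  have hqpos : ∀ x, 0 < x → 0 < q x := by
    intro x hx
    rw [hq x hx, herf x, sub_pos, div_lt_div_iff₀ hπ hx]
    have hkey := erfFF_lower hx
    have h2 : 2 / Real.sqrt Real.pi * erfFF (x / 2) * Real.sqrt Real.pi
        = 2 * erfFF (x / 2) := by field_simp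
    rw [h2]
    linarith
  have hqtend : Filter.Tendsto q Filter.atTop (nhds 0) := by
    have hC : Tendsto (fun x : ℝ => (2 / Real.sqrt Real.pi * Real.exp (1/4)) / x)
        atTop (𝓝 0) := Tendsto.div_atTop tendsto_const_nhds tendsto_id
    apply tendsto_of_tendsto_of_tendsto_of_le_of_le' tendsto_const_nhds hC
    · filter_upwards [eventually_gt_atTop (0:ℝ)] with x hx
      exact (hqpos x hx).le
    · filter_upwards [eventually_gt_atTop (0:ℝ)] with x hx
      rw [hq x hx, herf x]
      have h1 : erfFF (x / 2) ≤ Real.exp (1/4) := erfFF_le (by linarith)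
      have h2 : 2 / Real.sqrt Real.pi * erfFF (x / 2) / x
          ≤ 2 / Real.sqrt Real.pi * Real.exp (1/4) / x := by
        gcongr
      have h3 : 0 ≤ Real.exp (-(x ^ 2 / 4)) / Real.sqrt Real.pi := by positivity
      linarith
  refine ⟨⟨gfun, gfun_analytic, gfun_even, hgq, gfun_zero⟩, hqtend, hqpos, ?_⟩
  -- the maximum
  have hgcont : Continuous gfun :=
    continuous_iff_continuousAt.mpr fun x => (gfun_analytic x).continuousAt
  have hgtend : Tendsto gfun atTop (𝓝 0) := by
    apply hqtend.congr'
    filter_upwards [eventually_gt_atTop (0:ℝ)] with x hx using (hgq x hx).symm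
  have hq1 : 0 < q 1 := hqpos 1 one_pos
  have hev : ∀ᶠ x in atTop, gfun x < q 1 := hgtend.eventually (eventually_lt_nhds hq1)
  obtain ⟨N, hN⟩ := eventually_atTop.mp hev
  set R := max N 1 with hR
  have h01 : (1:ℝ) ∈ Set.Icc (0:ℝ) R := ⟨zero_le_one, le_max_right _ _⟩
  obtain ⟨x₀, hx₀mem, hx₀max⟩ :=
    isCompact_Icc.exists_isMaxOn ⟨1, h01⟩ hgcont.continuousOn
  have hx₀ge : q 1 ≤ gfun x₀ := by
    have h : gfun 1 ≤ gfun x₀ := hx₀max h01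
    rwa [hgq 1 one_pos] at h
  have hx₀pos : 0 < x₀ := by
    rcases hx₀mem.1.lt_or_eq with h | h
    · exact h
    · exfalso
      rw [← h, gfun_zero] at hx₀ge
      linarith
  have hqmaxpos : 0 < gfun x₀ := lt_of_lt_of_le hq1 hx₀ge
  have hub : ∀ x, 0 < x → q x ≤ gfun x₀ := by
    intro x hx
    rcases le_or_gt x R with h | h
    · rw [← hgq x hx]
      exact hx₀max ⟨hx.le, h⟩
    · have h2 : gfun x < q 1 := hN x (le_trans (le_max_left _ _) h.le)
      rw [← hgq x hx]
      linarith
  refine ⟨gfun x₀, hqmaxpos, fun x hx => hub x hx,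
    ⟨x₀, hx₀pos, (hgq x₀ hx₀pos).symm⟩, ?_⟩
  intro M hM hMlt r hr
  have hμr : 0 < μ * r := mul_pos hμ hr
  have h1 : q (μ * r) ≤ gfun x₀ := hub _ hμr
  have h2 : 0 < q (μ * r) := hqpos _ hμr
  have hd : 0 < 2 * G * μ * gfun x₀ := by positivity
  have h3 : M * (2 * G * μ * gfun x₀) < 1 := by
    rw [← lt_div_iff₀ hd] at *
    exact hMlt
  nlinarith
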